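/- Let G = {G^L | G^R} be a short dicotic game and let A be a left option of G that is reversible through B = 0 (that is, 0 is a right option of A and 0 ≼ G (mod D⁻)). Then: (1) if there is a left option C ∈ G^L \ {A} that is a winning first move for Left under misère play (i.e., o(C) ∈ {L, P}), then G = {G^L \ {A} | G^R} (mod D⁻); (2) if A is the only left option of G that is a winning first move for Left, then G = {*, G^L \ {A} | G^R} (mod D⁻), where * = {0 | 0}. -/

import Mathlib

namespace SetTheory

universe u

/-- Combinatorial pre-games, as in Mathlib (Dec 2024), removed from current Mathlib. -/
inductive PGame : Type (u + 1)
  | mk : ∀ α β : Type u, (α → PGame) → (β → PGame) → PGame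

namespace PGame

def LeftMoves : PGame → Type u
  | mk l _ _ _ => l

def RightMoves : PGame → Type u
  | mk _ r _ _ => r

def moveLeft : ∀ g : PGame, LeftMoves g → PGame
  | mk _l _ L _ => L

def moveRight : ∀ g : PGame, RightMoves g → PGame
  | mk _ _r _ R => R

inductive IsOption : PGame → PGame → Prop
  | moveLeft {x : PGame} (i : x.LeftMoves) : IsOption (x.moveLeft i) x
  | moveRight {x : PGame} (i : x.RightMoves) : IsOption (x.moveRight i) x

def Identical : PGame.{u} → PGame.{u} → Prop
  | mk _ _ xL xR, mk _ _ yL yR =>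
    Relator.BiTotal (fun i j => Identical (xL i) (yL j)) ∧
      Relator.BiTotal (fun i j => Identical (xR i) (yR j))

instance : Zero PGame :=
  ⟨⟨PEmpty, PEmpty, PEmpty.elim, PEmpty.elim⟩⟩

def star : PGame.{u} :=
  ⟨PUnit, PUnit, fun _ => 0, fun _ => 0⟩

def neg : PGame → PGame
  | ⟨l, r, L, R⟩ => ⟨r, l, fun i => neg (R i), fun i => neg (L i)⟩

instance : Neg PGame :=
  ⟨neg⟩

noncomputable def add (x y : PGame) : PGame := by
  induction x generalizing y with | mk xl xr _ _ IHxl IHxr => _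
  induction y with | mk yl yr yL yR IHyl IHyr => _
  have y := mk yl yr yL yR
  refine ⟨xl ⊕ yl, xr ⊕ yr, Sum.rec ?_ ?_, Sum.rec ?_ ?_⟩
  · exact fun i => IHxl i y
  · exact IHyl
  · exact fun i => IHxr i y
  · exact IHyr

noncomputable instance : Add PGame.{u} :=
  ⟨add⟩

noncomputable def birthday : PGame.{u} → Ordinal.{u}
  | ⟨_, _, xL, xR⟩ =>
    max (Ordinal.lsub.{u, u} fun i => birthday (xL i)) (Ordinal.lsub.{u, u} fun i => birthday (xR i))

theorem birthday_moveLeft_lt {x : PGame} (i : x.LeftMoves) :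
    (x.moveLeft i).birthday < x.birthday := by
  cases x; rw [birthday]; exact lt_max_of_lt_left (Ordinal.lt_lsub _ i)

theorem birthday_moveRight_lt {x : PGame} (i : x.RightMoves) :
    (x.moveRight i).birthday < x.birthday := by
  cases x; rw [birthday]; exact lt_max_of_lt_right (Ordinal.lt_lsub _ i)

end PGame

end SetTheory

open SetTheory PGame

namespace MisereDicot

def Follower (G' G : PGame) : Prop := Relation.ReflTransGen PGame.IsOption G' G

def IsShort (G : PGame) : Prop :=
  ∀ G', Follower G' G → Finite G'.LeftMoves ∧ Finite G'.RightMoves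

def Dicot (G : PGame) : Prop :=
  ∀ G', Follower G' G → (IsEmpty G'.LeftMoves ↔ IsEmpty G'.RightMoves)

mutual
def LeftWinsFirst (G : PGame) : Prop :=
  IsEmpty G.LeftMoves ∨ ∃ i, ¬ RightWinsFirst (G.moveLeft i)
termination_by G.birthday
decreasing_by exact PGame.birthday_moveLeft_lt i

def RightWinsFirst (G : PGame) : Prop :=
  IsEmpty G.RightMoves ∨ ∃ j, ¬ LeftWinsFirst (G.moveRight j)
termination_by G.birthday
decreasing_by exact PGame.birthday_moveRight_lt j
end

inductive MOutcome : Type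
  | L | N | P | R
deriving DecidableEq

instance : LE MOutcome := ⟨fun a b => a = b ∨ a = .R ∨ b = .L⟩

noncomputable def outcome (G : PGame) : MOutcome := by
  classical
  exact if LeftWinsFirst G then (if RightWinsFirst G then .N else .L)
        else (if RightWinsFirst G then .R else .P)

def Dge (G H : PGame) : Prop :=
  ∀ X : PGame, IsShort X → Dicot X → outcome (H + X) ≤ outcome (G + X)

def Deq (G H : PGame) : Prop :=
  ∀ X : PGame, IsShort X → Dicot X → outcome (G + X) = outcome (H + X)

def Dgt (G H : PGame) : Prop := Dge G H ∧ ¬ Deq G H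

def DInvertible (G : PGame) : Prop :=
  ∃ H : PGame, IsShort H ∧ Dicot H ∧ Deq (G + H) 0

/-- The left option `G^L_i` is reversible through its right option `(G^L_i)^R_j ≼ G`. -/
def LeftReversibleAt (G : PGame) (i : G.LeftMoves) (j : (G.moveLeft i).RightMoves) : Prop :=
  Dge G ((G.moveLeft i).moveRight j)

def RightReversibleAt (G : PGame) (j : G.RightMoves) (i : (G.moveRight j).LeftMoves) : Prop :=
  Dge ((G.moveRight j).moveLeft i) G

/-- `G` has a dominated left option (removable by the Domination theorem). -/
def LeftDominated (G : PGame) : Prop :=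
  ∃ i i' : G.LeftMoves, ¬ (G.moveLeft i).Identical (G.moveLeft i') ∧
    Dge (G.moveLeft i') (G.moveLeft i)

def RightDominated (G : PGame) : Prop :=
  ∃ j j' : G.RightMoves, ¬ (G.moveRight j).Identical (G.moveRight j') ∧
    Dge (G.moveRight j) (G.moveRight j')

/-- `G` has a non-atomic reversible left option (bypassable). -/
def LeftNonAtomicReversible (G : PGame) : Prop :=
  ∃ i j, LeftReversibleAt G i j ∧ Nonempty ((G.moveLeft i).moveRight j).LeftMoves

def RightNonAtomicReversible (G : PGame) : Prop :=
  ∃ j i, RightReversibleAt G j i ∧ Nonempty ((G.moveRight j).moveLeft i).RightMoves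

/-- `G` has an atomic-reversible left option to which the atomic-reversibility
replacement applies nontrivially (i.e. changing the set of options): either some
other left option is a winning first move for Left (so the option is removable),
or the option is not already `*`. -/
def LeftAtomicReducible (G : PGame) : Prop :=
  ∃ i j, LeftReversibleAt G i j ∧ IsEmpty ((G.moveLeft i).moveRight j).LeftMoves ∧
    ((∃ i', ¬ (G.moveLeft i').Identical (G.moveLeft i) ∧ ¬ RightWinsFirst (G.moveLeft i')) ∨
      ¬ (G.moveLeft i).Identical star)

def RightAtomicReducible (G : PGame) : Prop :=
  ∃ j i, RightReversibleAt G j i ∧ IsEmpty ((G.moveRight j).moveLeft i).RightMoves ∧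
    ((∃ j', ¬ (G.moveRight j').Identical (G.moveRight j) ∧ ¬ LeftWinsFirst (G.moveRight j')) ∨
      ¬ (G.moveRight j).Identical star)

/-- The Substitution theorem applies to `G`: `G = {A | C}` with `A` an
atomic-reversible left option and `C` an atomic-reversible right option. -/
def SubstitutionReducible (G : PGame) : Prop :=
  (∀ i i' : G.LeftMoves, (G.moveLeft i).Identical (G.moveLeft i')) ∧
  (∀ j j' : G.RightMoves, (G.moveRight j).Identical (G.moveRight j')) ∧
  (∃ i j, LeftReversibleAt G i j ∧ IsEmpty ((G.moveLeft i).moveRight j).LeftMoves) ∧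
  (∃ j i, RightReversibleAt G j i ∧ IsEmpty ((G.moveRight j).moveLeft i).RightMoves)

/-- `G` is in canonical form: no follower admits any of the misère-dicot
simplifications (domination, non-atomic reversibility, atomic reversibility,
substitution) producing an equivalent game with a different set of options. -/
def CanonicalForm (G : PGame) : Prop :=
  ∀ G', Follower G' G →
    ¬ (LeftDominated G' ∨ RightDominated G' ∨
       LeftNonAtomicReversible G' ∨ RightNonAtomicReversible G' ∨
       LeftAtomicReducible G' ∨ RightAtomicReducible G' ∨
       SubstitutionReducible G')

/-- The game `*2 = {0, * | 0, *}`. -/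
def star2 : PGame :=
  PGame.mk Bool Bool (fun b => cond b star 0) (fun b => cond b star 0)

open Classical in
/-- The adjoint `G°` of `G`. -/
noncomputable def adjoint : PGame → PGame
  | PGame.mk l r L R =>
    if IsEmpty l ∧ IsEmpty r then star
    else if IsEmpty l then PGame.mk r PUnit (fun j => adjoint (R j)) (fun _ => 0)
    else if IsEmpty r then PGame.mk PUnit l (fun _ => 0) (fun i => adjoint (L i))
    else PGame.mk r l (fun j => adjoint (R j)) (fun i => adjoint (L i))

/-- A universe of short games: a class closed under taking options, disjunctive
sums and conjugates. -/
structure GameUniverse where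
  mem : PGame → Prop
  short_mem : ∀ G, mem G → IsShort G
  isOption_mem : ∀ G G', mem G → PGame.IsOption G' G → mem G'
  add_mem : ∀ G H, mem G → mem H → mem (G + H)
  neg_mem : ∀ G, mem G → mem (-G)

/-- `G ≽ H` modulo the universe `U`. -/
def UGe (U : GameUniverse) (G H : PGame) : Prop :=
  ∀ X : PGame, U.mem X → outcome (H + X) ≤ outcome (G + X)

/-- `G = H` modulo the universe `U`. -/
def UEq (U : GameUniverse) (G H : PGame) : Prop :=
  ∀ X : PGame, U.mem X → outcome (G + X) = outcome (H + X)

/-- `G ≻ H` modulo the universe `U`. -/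
def UGt (U : GameUniverse) (G H : PGame) : Prop := UGe U G H ∧ ¬ UEq U G H

/-- `J` is invertible in the universe `U`. -/
def UInvertible (U : GameUniverse) (J : PGame) : Prop :=
  ∃ J' : PGame, U.mem J' ∧ UEq U (J + J') 0

end MisereDicot

namespace SetTheory

namespace PGame

theorem identical_iff {x y : PGame} : x.Identical y ↔
    Relator.BiTotal (fun i j => (x.moveLeft i).Identical (y.moveLeft j)) ∧
      Relator.BiTotal (fun i j => (x.moveRight i).Identical (y.moveRight j)) := by
  cases x; cases y; exact Iff.rfl

theorem Identical.refl (x : PGame) : x.Identical x := by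
  induction x with
  | mk l r L R ihL ihR =>
    exact identical_iff.mpr ⟨⟨fun i => ⟨i, ihL i⟩, fun i => ⟨i, ihL i⟩⟩,
      ⟨fun i => ⟨i, ihR i⟩, fun i => ⟨i, ihR i⟩⟩⟩

theorem Identical.symm : ∀ {x y : PGame}, x.Identical y → y.Identical x := by
  intro x
  induction x with
  | mk l r L R ihL ihR =>
    intro y h
    obtain ⟨⟨hL1, hL2⟩, ⟨hR1, hR2⟩⟩ := identical_iff.mp h
    refine identical_iff.mpr ⟨⟨fun i => ?_, fun i => ?_⟩, ⟨fun i => ?_, fun i => ?_⟩⟩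
    · obtain ⟨j, hj⟩ := hL2 i
      exact ⟨j, ihL j hj⟩
    · obtain ⟨j, hj⟩ := hL1 i
      exact ⟨j, ihL i hj⟩
    · obtain ⟨j, hj⟩ := hR2 i
      exact ⟨j, ihR j hj⟩
    · obtain ⟨j, hj⟩ := hR1 i
      exact ⟨j, ihR i hj⟩

theorem Identical.trans : ∀ {x y z : PGame}, x.Identical y → y.Identical z → x.Identical z := by
  intro x
  induction x with
  | mk l r L R ihL ihR =>
    intro y z h1 h2
    obtain ⟨⟨a1, a2⟩, ⟨a3, a4⟩⟩ := identical_iff.mp h1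
    obtain ⟨⟨b1, b2⟩, ⟨b3, b4⟩⟩ := identical_iff.mp h2
    refine identical_iff.mpr ⟨⟨fun i => ?_, fun k => ?_⟩, ⟨fun i => ?_, fun k => ?_⟩⟩
    · obtain ⟨j, hj⟩ := a1 i
      obtain ⟨k, hk⟩ := b1 j
      exact ⟨k, ihL i hj hk⟩
    · obtain ⟨j, hj⟩ := b2 k
      obtain ⟨i, hi⟩ := a2 j
      exact ⟨i, ihL i hi hj⟩
    · obtain ⟨j, hj⟩ := a3 i
      obtain ⟨k, hk⟩ := b3 j
      exact ⟨k, ihR i hj hk⟩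
    · obtain ⟨j, hj⟩ := b4 k
      obtain ⟨i, hi⟩ := a4 j
      exact ⟨i, ihR i hi hj⟩

theorem Identical.moveLeft {x y : PGame} (h : x.Identical y) (i : x.LeftMoves) :
    ∃ j, (x.moveLeft i).Identical (y.moveLeft j) := by
  obtain ⟨⟨h1, -⟩, -⟩ := identical_iff.mp h
  exact h1 i

theorem Identical.moveRight {x y : PGame} (h : x.Identical y) (i : x.RightMoves) :
    ∃ j, (x.moveRight i).Identical (y.moveRight j) := by
  obtain ⟨-, ⟨h1, -⟩⟩ := identical_iff.mp h
  exact h1 i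

theorem leftMoves_add (x y : PGame) : (x + y).LeftMoves = (x.LeftMoves ⊕ y.LeftMoves) := by
  cases x; cases y; rfl

theorem rightMoves_add (x y : PGame) : (x + y).RightMoves = (x.RightMoves ⊕ y.RightMoves) := by
  cases x; cases y; rfl

def toLeftMovesAdd {x y : PGame} : x.LeftMoves ⊕ y.LeftMoves ≃ (x + y).LeftMoves :=
  Equiv.cast (leftMoves_add x y).symm

def toRightMovesAdd {x y : PGame} : x.RightMoves ⊕ y.RightMoves ≃ (x + y).RightMoves :=
  Equiv.cast (rightMoves_add x y).symm

theorem add_moveLeft_inl {x y : PGame} (i : x.LeftMoves) :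
    (x + y).moveLeft (toLeftMovesAdd (Sum.inl i)) = x.moveLeft i + y := by
  cases x; cases y; rfl

theorem add_moveLeft_inr {x y : PGame} (i : y.LeftMoves) :
    (x + y).moveLeft (toLeftMovesAdd (Sum.inr i)) = x + y.moveLeft i := by
  cases x; cases y; rfl

theorem add_moveRight_inl {x y : PGame} (i : x.RightMoves) :
    (x + y).moveRight (toRightMovesAdd (Sum.inl i)) = x.moveRight i + y := by
  cases x; cases y; rfl

theorem add_moveRight_inr {x y : PGame} (i : y.RightMoves) :
    (x + y).moveRight (toRightMovesAdd (Sum.inr i)) = x + y.moveRight i := by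
  cases x; cases y; rfl

theorem leftMoves_add_cases {x y : PGame} (k : (x + y).LeftMoves) {P : (x + y).LeftMoves → Prop}
    (hl : ∀ i, P (toLeftMovesAdd (Sum.inl i))) (hr : ∀ i, P (toLeftMovesAdd (Sum.inr i))) :
    P k := by
  obtain ⟨i, rfl⟩ := (toLeftMovesAdd (x := x) (y := y)).surjective k
  rcases i with i | i
  · exact hl i
  · exact hr i

theorem rightMoves_add_cases {x y : PGame} (k : (x + y).RightMoves)
    {P : (x + y).RightMoves → Prop}
    (hl : ∀ i, P (toRightMovesAdd (Sum.inl i))) (hr : ∀ i, P (toRightMovesAdd (Sum.inr i))) :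
    P k := by
  obtain ⟨i, rfl⟩ := (toRightMovesAdd (x := x) (y := y)).surjective k
  rcases i with i | i
  · exact hl i
  · exact hr i

instance isEmpty_leftMoves_zero : IsEmpty (LeftMoves 0) := ⟨fun i => PEmpty.elim i⟩

instance isEmpty_rightMoves_zero : IsEmpty (RightMoves 0) := ⟨fun i => PEmpty.elim i⟩

@[elab_as_elim]
noncomputable def moveRecOn {C : PGame → Sort*} (x : PGame)
    (IH : ∀ y : PGame, (∀ i, C (y.moveLeft i)) → (∀ j, C (y.moveRight j)) → C y) : C x :=
  x.rec fun yl yr yL yR => IH (mk yl yr yL yR)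

end PGame

end SetTheory

namespace MisereDicot


/-! ### Auxiliary lemmas -/

protected theorem Identical.add : ∀ {a b c d : PGame}, a.Identical b → c.Identical d →
    (a + c).Identical (b + d)
  | PGame.mk al ar aL aR, PGame.mk bl br bL bR, PGame.mk cl cr cL cR, PGame.mk dl dr dL dR,
    hab, hcd => by
    refine identical_iff.mpr ⟨⟨?_, ?_⟩, ⟨?_, ?_⟩⟩
    · rintro (i | i)
      · obtain ⟨j, hj⟩ := hab.moveLeft i
        exact ⟨Sum.inl j, Identical.add hj hcd⟩
      · obtain ⟨j, hj⟩ := hcd.moveLeft i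
        exact ⟨Sum.inr j, Identical.add hab hj⟩
    · rintro (j | j)
      · obtain ⟨i, hi⟩ := hab.symm.moveLeft j
        exact ⟨Sum.inl i, Identical.add hi.symm hcd⟩
      · obtain ⟨i, hi⟩ := hcd.symm.moveLeft j
        exact ⟨Sum.inr i, Identical.add hab hi.symm⟩
    · rintro (i | i)
      · obtain ⟨j, hj⟩ := hab.moveRight i
        exact ⟨Sum.inl j, Identical.add hj hcd⟩
      · obtain ⟨j, hj⟩ := hcd.moveRight i
        exact ⟨Sum.inr j, Identical.add hab hj⟩
    · rintro (j | j)
      · obtain ⟨i, hi⟩ := hab.symm.moveRight j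
        exact ⟨Sum.inl i, Identical.add hi.symm hcd⟩
      · obtain ⟨i, hi⟩ := hcd.symm.moveRight j
        exact ⟨Sum.inr i, Identical.add hab hi.symm⟩
termination_by a _ c _ => (a.birthday, c.birthday)
decreasing_by
  all_goals
    first
    | exact Prod.Lex.left _ _ (PGame.birthday_moveLeft_lt (x := PGame.mk al ar aL aR) _)
    | exact Prod.Lex.right _ (PGame.birthday_moveLeft_lt (x := PGame.mk cl cr cL cR) _)
    | exact Prod.Lex.left _ _ (PGame.birthday_moveRight_lt (x := PGame.mk al ar aL aR) _)
    | exact Prod.Lex.right _ (PGame.birthday_moveRight_lt (x := PGame.mk cl cr cL cR) _)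

lemma lw_def (G : PGame) : LeftWinsFirst G ↔
    IsEmpty G.LeftMoves ∨ ∃ i, ¬ RightWinsFirst (G.moveLeft i) := by rw [LeftWinsFirst]

lemma rw_def (G : PGame) : RightWinsFirst G ↔
    IsEmpty G.RightMoves ∨ ∃ j, ¬ LeftWinsFirst (G.moveRight j) := by rw [RightWinsFirst]

lemma not_rw_iff {G : PGame} : ¬ RightWinsFirst G ↔
    Nonempty G.RightMoves ∧ ∀ j, LeftWinsFirst (G.moveRight j) := by
  rw [rw_def]; push_neg; exact Iff.rfl

lemma not_lw_iff {G : PGame} : ¬ LeftWinsFirst G ↔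
    Nonempty G.LeftMoves ∧ ∀ i, RightWinsFirst (G.moveLeft i) := by
  rw [lw_def]; push_neg; exact Iff.rfl

theorem lw_rw_congr : ∀ {x y : PGame}, x.Identical y →
    (LeftWinsFirst x ↔ LeftWinsFirst y) ∧ (RightWinsFirst x ↔ RightWinsFirst y)
  | PGame.mk xl xr xL xR, PGame.mk yl yr yL yR, h => by
    have key : ∀ {a b : PGame}, a.Identical b → a.birthday < (PGame.mk xl xr xL xR).birthday →
        (LeftWinsFirst a ↔ LeftWinsFirst b) ∧ (RightWinsFirst a ↔ RightWinsFirst b) :=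
      fun hab _ => lw_rw_congr hab
    constructor
    · rw [lw_def, lw_def]
      constructor
      · rintro (he | ⟨i, hi⟩)
        · left
          by_contra hne
          rw [not_isEmpty_iff] at hne
          obtain ⟨j⟩ := hne
          obtain ⟨i, -⟩ := h.symm.moveLeft j
          exact he.false i
        · obtain ⟨j, hj⟩ := h.moveLeft i
          exact Or.inr ⟨j, fun hr => hi (((key hj (PGame.birthday_moveLeft_lt i)).2).mpr hr)⟩
      · rintro (he | ⟨j, hj⟩)
        · left
          by_contra hne
          rw [not_isEmpty_iff] at hne
          obtain ⟨i⟩ := hne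
          obtain ⟨j, -⟩ := h.moveLeft i
          exact he.false j
        · obtain ⟨i, hi⟩ := h.symm.moveLeft j
          exact Or.inr ⟨i, fun hr =>
            hj (((key hi.symm (PGame.birthday_moveLeft_lt i)).2).mp hr)⟩
    · rw [rw_def, rw_def]
      constructor
      · rintro (he | ⟨i, hi⟩)
        · left
          by_contra hne
          rw [not_isEmpty_iff] at hne
          obtain ⟨j⟩ := hne
          obtain ⟨i, -⟩ := h.symm.moveRight j
          exact he.false i
        · obtain ⟨j, hj⟩ := h.moveRight i
          exact Or.inr ⟨j, fun hr => hi (((key hj (PGame.birthday_moveRight_lt i)).1).mpr hr)⟩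
      · rintro (he | ⟨j, hj⟩)
        · left
          by_contra hne
          rw [not_isEmpty_iff] at hne
          obtain ⟨i⟩ := hne
          obtain ⟨j, -⟩ := h.moveRight i
          exact he.false j
        · obtain ⟨i, hi⟩ := h.symm.moveRight j
          exact Or.inr ⟨i, fun hr =>
            hj (((key hi.symm (PGame.birthday_moveRight_lt i)).1).mp hr)⟩
termination_by x _ _ => x.birthday

lemma outcome_le_iff {G H : PGame} : outcome G ≤ outcome H ↔
    ((LeftWinsFirst G → LeftWinsFirst H) ∧ (RightWinsFirst H → RightWinsFirst G)) := by
  classical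
  unfold outcome
  constructor
  · intro hle
    split_ifs at hle with h1 h2 h3 h4 h5 h6 h7 h8 <;>
      refine ⟨fun hG => ?_, fun hH => ?_⟩ <;>
        first
          | assumption
          | (exfalso; rcases hle with h | h | h <;> simp_all)
  · rintro ⟨hlw, hrw⟩
    split_ifs with h1 h2 h3 h4 h5 h6 h7 h8 <;>
      first
        | (left; rfl)
        | (right; left; rfl)
        | (right; right; rfl)
        | (exfalso; tauto)

lemma outcome_eq_iff {G H : PGame} : outcome G = outcome H ↔
    ((LeftWinsFirst G ↔ LeftWinsFirst H) ∧ (RightWinsFirst G ↔ RightWinsFirst H)) := by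
  classical
  unfold outcome
  constructor
  · intro hle
    split_ifs at hle <;> simp_all <;> tauto
  · rintro ⟨h1, h2⟩
    split_ifs <;> tauto

lemma outcome_LP_iff {G : PGame} :
    (outcome G = MOutcome.L ∨ outcome G = MOutcome.P) ↔ ¬ RightWinsFirst G := by
  classical
  unfold outcome
  split_ifs <;> simp_all

lemma identical_zero_of_empty {X : PGame} (hl : IsEmpty X.LeftMoves)
    (hr : IsEmpty X.RightMoves) : X.Identical 0 := by
  rw [identical_iff]
  constructor <;> constructor <;> intro a <;>
    first
      | exact (hl.false a).elim
      | exact (hr.false a).elim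
      | exact isEmptyElim a

lemma zero_add_identical (X : PGame) : (0 + X).Identical X := by
  induction X with
  | mk l r L R ihL ihR =>
    refine identical_iff.mpr ⟨⟨?_, fun i => ⟨Sum.inr i, ihL i⟩⟩, ⟨?_, fun i => ⟨Sum.inr i, ihR i⟩⟩⟩
    · rintro (i | i)
      · exact PEmpty.elim i
      · exact ⟨i, ihL i⟩
    · rintro (i | i)
      · exact PEmpty.elim i
      · exact ⟨i, ihR i⟩

lemma add_zero_identical (X : PGame) : (X + 0).Identical X := by
  induction X with
  | mk l r L R ihL ihR =>
    refine identical_iff.mpr ⟨⟨?_, fun i => ⟨Sum.inl i, ihL i⟩⟩, ⟨?_, fun i => ⟨Sum.inl i, ihR i⟩⟩⟩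
    · rintro (i | i)
      · exact ⟨i, ihL i⟩
      · exact PEmpty.elim i
    · rintro (i | i)
      · exact ⟨i, ihR i⟩
      · exact PEmpty.elim i

lemma lw_zero : LeftWinsFirst 0 := by
  rw [lw_def]; left; exact inferInstance

lemma not_rw_star : ¬ RightWinsFirst star := by
  rw [rw_def]
  push_neg
  constructor
  · exact ⟨PUnit.unit⟩
  · exact fun j => lw_zero

lemma Dicot.moveLeft {X : PGame} (h : Dicot X) (i : X.LeftMoves) : Dicot (X.moveLeft i) :=
  fun G' hf => h G' (hf.tail (PGame.IsOption.moveLeft i))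

lemma Dicot.moveRight {X : PGame} (h : Dicot X) (j : X.RightMoves) : Dicot (X.moveRight j) :=
  fun G' hf => h G' (hf.tail (PGame.IsOption.moveRight j))

lemma IsShort.moveLeft {X : PGame} (h : IsShort X) (i : X.LeftMoves) : IsShort (X.moveLeft i) :=
  fun G' hf => h G' (hf.tail (PGame.IsOption.moveLeft i))

lemma IsShort.moveRight {X : PGame} (h : IsShort X) (j : X.RightMoves) : IsShort (X.moveRight j) :=
  fun G' hf => h G' (hf.tail (PGame.IsOption.moveRight j))

lemma Dicot.self {X : PGame} (h : Dicot X) : IsEmpty X.LeftMoves ↔ IsEmpty X.RightMoves :=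
  h X Relation.ReflTransGen.refl

section Main

variable {xl xr kl : Type} {xL : xl → PGame} {xR : xr → PGame} {kL : kl → PGame}

/-- If `G ≽ 0 (mod D⁻)` then Left wins `G + X` whenever she wins `X` (same mover). -/
lemma rev_transfer (hrev : Dge (PGame.mk xl xr xL xR) 0) {X : PGame}
    (hs : IsShort X) (hd : Dicot X) :
    (LeftWinsFirst X → LeftWinsFirst (PGame.mk xl xr xL xR + X)) ∧
    (¬ RightWinsFirst X → ¬ RightWinsFirst (PGame.mk xl xr xL xR + X)) := by
  have h := outcome_le_iff.mp (hrev X hs hd)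
  have hcongr := lw_rw_congr (zero_add_identical X)
  exact ⟨fun hl => h.1 (hcongr.1.mpr hl), fun hr hr' => hr (hcongr.2.mp (h.2 hr'))⟩

/-- Claim C: with hypotheses on `K = mk kl xr kL xR`, Left wins `K + X`
whenever she wins `X` (same mover). -/
lemma claimC (hrev : Dge (PGame.mk xl xr xL xR) 0) (hxr : Nonempty xr)
    (hK3 : ∃ k, ¬ RightWinsFirst (kL k)) :
    ∀ X : PGame, IsShort X → Dicot X →
      (LeftWinsFirst X → LeftWinsFirst (PGame.mk kl xr kL xR + X)) ∧
      (¬ RightWinsFirst X → ¬ RightWinsFirst (PGame.mk kl xr kL xR + X)) := by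
  intro X
  induction X using PGame.moveRecOn with
  | _ X ihl ihr =>
    intro hs hd
    set K : PGame := PGame.mk kl xr kL xR with hK
    constructor
    · intro hlw
      rw [lw_def] at hlw
      rcases hlw with he | ⟨i, hi⟩
      · -- X has no moves at all; use the option from hK3
        have he' : IsEmpty X.RightMoves := hd.self.mp he
        obtain ⟨k0, hk0⟩ := hK3
        have hid : (kL k0 + X).Identical (kL k0) :=
          (Identical.add (Identical.refl _) (identical_zero_of_empty he he')).trans
            (add_zero_identical _)
        rw [lw_def]
        refine Or.inr ⟨toLeftMovesAdd (Sum.inl k0), ?_⟩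
        erw [PGame.add_moveLeft_inl]
        exact fun hr => hk0 ((lw_rw_congr hid).2.mp hr)
      · -- Left wins X moving to X.moveLeft i
        have h2 := (ihl i (hs.moveLeft i) (hd.moveLeft i)).2 hi
        rw [lw_def]
        refine Or.inr ⟨toLeftMovesAdd (Sum.inr i), ?_⟩
        rw [PGame.add_moveLeft_inr]
        exact h2
    · intro hnr
      have hnrG := (rev_transfer hrev hs hd).2 hnr
      rw [not_rw_iff] at hnrG
      rw [not_rw_iff] at hnr
      rw [not_rw_iff]
      refine ⟨⟨toRightMovesAdd (Sum.inl hxr.some)⟩, ?_⟩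
      intro jj
      refine PGame.rightMoves_add_cases (P := fun jj => LeftWinsFirst ((K + X).moveRight jj)) jj ?_ ?_
      · intro k
        have := hnrG.2 (toRightMovesAdd (Sum.inl k))
        erw [PGame.add_moveRight_inl] at this ⊢
        exact this
      · intro j'
        rw [PGame.add_moveRight_inr]
        exact (ihr j' (hs.moveRight j') (hd.moveRight j')).1 (hnr.2 j')


/-- Main lemma: the replacement `K` of `G` has the same outcome in every sum with
a short dicot. -/
lemma main_equiv (iA : xl) {j : (xL iA).RightMoves} (hB0 : ((xL iA).moveRight j).Identical 0)
    (hrev : Dge (PGame.mk xl xr xL xR) 0) (hxr : Nonempty xr)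
    (hK1 : ∀ k, (∃ i, kL k = xL i) ∨ kL k = star)
    (hK2 : ∀ i, ¬ (xL i).Identical (xL iA) → ∃ k, kL k = xL i)
    (hK3 : ∃ k, ¬ RightWinsFirst (kL k)) :
    ∀ X : PGame, IsShort X → Dicot X →
      (LeftWinsFirst (PGame.mk xl xr xL xR + X) ↔ LeftWinsFirst (PGame.mk kl xr kL xR + X)) ∧
      (RightWinsFirst (PGame.mk xl xr xL xR + X) ↔ RightWinsFirst (PGame.mk kl xr kL xR + X)) := by
  intro X
  induction X using PGame.moveRecOn with
  | _ X ih ihr =>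
    intro hs hd
    set G : PGame := PGame.mk xl xr xL xR with hGdef
    set K : PGame := PGame.mk kl xr kL xR with hKdef
    constructor
    · -- Left-wins-first equivalence
      constructor
      · -- LW (G + X) → LW (K + X)
        intro hlw
        rw [lw_def] at hlw
        rcases hlw with he | ⟨ii, hii⟩
        · exact absurd ((isEmpty_sum.mp ((Equiv.isEmpty_congr toLeftMovesAdd).mpr he)).1.false iA)
            id
        · refine PGame.leftMoves_add_cases
            (P := fun ii => ¬ RightWinsFirst ((G + X).moveLeft ii) → LeftWinsFirst (K + X))
            ii ?_ ?_ hii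
          · intro i hi
            rw [PGame.add_moveLeft_inl] at hi
            by_cases hid : (xL i).Identical (xL iA)
            · -- the move to an `A`-like option: reverse it out through `0`
              obtain ⟨j', hj'⟩ := hid.symm.moveRight j
              have hj0 : ((xL i).moveRight j').Identical 0 := hj'.symm.trans hB0
              rw [not_rw_iff] at hi
              have hlx := hi.2 (toRightMovesAdd (Sum.inl j'))
              erw [PGame.add_moveRight_inl] at hlx
              have hLWX : LeftWinsFirst X :=
                (lw_rw_congr ((Identical.add hj0 (Identical.refl X)).trans
                  (zero_add_identical X))).1.mp hlx
              exact (claimC hrev hxr hK3 X hs hd).1 hLWX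
            · obtain ⟨k, hk⟩ := hK2 i hid
              rw [lw_def]
              refine Or.inr ⟨toLeftMovesAdd (Sum.inl k), ?_⟩
              erw [PGame.add_moveLeft_inl]
              show ¬ RightWinsFirst (kL k + X)
              rw [hk]
              exact hi
          · intro i' hi'
            rw [PGame.add_moveLeft_inr] at hi'
            rw [lw_def]
            refine Or.inr ⟨toLeftMovesAdd (Sum.inr i'), ?_⟩
            rw [PGame.add_moveLeft_inr]
            exact fun hr => hi' ((ih i' (hs.moveLeft i') (hd.moveLeft i')).2.mpr hr)
      · -- LW (K + X) → LW (G + X)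
        intro hlw
        rw [lw_def] at hlw
        rcases hlw with he | ⟨ii, hii⟩
        · exact absurd ((isEmpty_sum.mp ((Equiv.isEmpty_congr toLeftMovesAdd).mpr he)).1.false
            hK3.choose) id
        · refine PGame.leftMoves_add_cases
            (P := fun ii => ¬ RightWinsFirst ((K + X).moveLeft ii) → LeftWinsFirst (G + X))
            ii ?_ ?_ hii
          · intro k hk
            rw [PGame.add_moveLeft_inl] at hk
            replace hk : ¬ RightWinsFirst (kL k + X) := hk
            rcases hK1 k with ⟨i, hik⟩ | hstar
            · rw [hik] at hk
              rw [lw_def]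
              exact Or.inr ⟨toLeftMovesAdd (Sum.inl i), by erw [PGame.add_moveLeft_inl]; exact hk⟩
            · rw [hstar] at hk
              rw [not_rw_iff] at hk
              have hlx := hk.2 (toRightMovesAdd (Sum.inl PUnit.unit))
              erw [PGame.add_moveRight_inl] at hlx
              have hLWX : LeftWinsFirst X :=
                (lw_rw_congr ((Identical.add (Identical.refl (0 : PGame))
                  (Identical.refl X)).trans (zero_add_identical X))).1.mp hlx
              exact (rev_transfer hrev hs hd).1 hLWX
          · intro i' hi'
            rw [PGame.add_moveLeft_inr] at hi'
            rw [lw_def]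
            refine Or.inr ⟨toLeftMovesAdd (Sum.inr i'), ?_⟩
            rw [PGame.add_moveLeft_inr]
            exact fun hr => hi' ((ih i' (hs.moveLeft i') (hd.moveLeft i')).2.mp hr)
    · -- Right-wins-first equivalence
      constructor
      · intro hrw
        rw [rw_def] at hrw
        rcases hrw with he | ⟨jj, hjj⟩
        · exact absurd ((isEmpty_sum.mp ((Equiv.isEmpty_congr toRightMovesAdd).mpr he)).1.false
            hxr.some) id
        · refine PGame.rightMoves_add_cases
            (P := fun jj => ¬ LeftWinsFirst ((G + X).moveRight jj) → RightWinsFirst (K + X))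
            jj ?_ ?_ hjj
          · intro k hk
            rw [PGame.add_moveRight_inl] at hk
            rw [rw_def]
            exact Or.inr ⟨toRightMovesAdd (Sum.inl k),
              by erw [PGame.add_moveRight_inl]; exact hk⟩
          · intro j' hj'
            rw [PGame.add_moveRight_inr] at hj'
            rw [rw_def]
            refine Or.inr ⟨toRightMovesAdd (Sum.inr j'), ?_⟩
            rw [PGame.add_moveRight_inr]
            exact fun hl => hj' ((ihr j' (hs.moveRight j') (hd.moveRight j')).1.mpr hl)
      · intro hrw
        rw [rw_def] at hrw
        rcases hrw with he | ⟨jj, hjj⟩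
        · exact absurd ((isEmpty_sum.mp ((Equiv.isEmpty_congr toRightMovesAdd).mpr he)).1.false
            hxr.some) id
        · refine PGame.rightMoves_add_cases
            (P := fun jj => ¬ LeftWinsFirst ((K + X).moveRight jj) → RightWinsFirst (G + X))
            jj ?_ ?_ hjj
          · intro k hk
            rw [PGame.add_moveRight_inl] at hk
            rw [rw_def]
            exact Or.inr ⟨toRightMovesAdd (Sum.inl k),
              by erw [PGame.add_moveRight_inl]; exact hk⟩
          · intro j' hj'
            rw [PGame.add_moveRight_inr] at hj'
            rw [rw_def]
            refine Or.inr ⟨toRightMovesAdd (Sum.inr j'), ?_⟩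
            rw [PGame.add_moveRight_inr]
            exact fun hl => hj' ((ihr j' (hs.moveRight j') (hd.moveRight j')).1.mp hl)

end Main

/-- Atomic reversibility: let `A = xL iA` be a left option of `G`
reversible through `B = 0`.  (1) If some other left option is a winning first move
for Left, then `A` may be removed; (2) if `A` is the only winning first move for
Left among the left options, then `A` may be replaced by `*`. -/
theorem stmt11 (xl xr : Type) (xL : xl → PGame) (xR : xr → PGame)
    (hs : IsShort (PGame.mk xl xr xL xR)) (hd : Dicot (PGame.mk xl xr xL xR))
    (iA : xl) (j : (xL iA).RightMoves) (hB0 : ((xL iA).moveRight j).Identical 0)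
    (hrev : Dge (PGame.mk xl xr xL xR) 0) :
    ((∃ i, ¬ (xL i).Identical (xL iA) ∧
        (outcome (xL i) = MOutcome.L ∨ outcome (xL i) = MOutcome.P)) →
      Deq (PGame.mk xl xr xL xR)
        (PGame.mk {i : xl // ¬ (xL i).Identical (xL iA)} xr (fun i => xL i.1) xR)) ∧
    (((outcome (xL iA) = MOutcome.L ∨ outcome (xL iA) = MOutcome.P) ∧
        (∀ i, (outcome (xL i) = MOutcome.L ∨ outcome (xL i) = MOutcome.P) →
          (xL i).Identical (xL iA))) →
      Deq (PGame.mk xl xr xL xR)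
        (PGame.mk (PUnit ⊕ {i : xl // ¬ (xL i).Identical (xL iA)}) xr
          (Sum.elim (fun _ => star) (fun i => xL i.1)) xR)) := by
  have hxr : Nonempty xr := by
    have h := hd _ Relation.ReflTransGen.refl
    have h2 : ¬ IsEmpty (PGame.mk xl xr xL xR).RightMoves := fun hE => (h.mpr hE).false iA
    exact not_isEmpty_iff.mp h2
  constructor
  · rintro ⟨i₀, hne, hLP⟩
    intro X hsX hdX
    refine outcome_eq_iff.mpr
      (main_equiv (kL := fun i : {i : xl // ¬ (xL i).Identical (xL iA)} => xL i.1)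
        iA hB0 hrev hxr ?_ ?_ ?_ X hsX hdX)
    · exact fun k => Or.inl ⟨k.1, rfl⟩
    · exact fun i h => ⟨⟨i, h⟩, rfl⟩
    · exact ⟨⟨i₀, hne⟩, outcome_LP_iff.mp hLP⟩
  · rintro ⟨-, -⟩
    intro X hsX hdX
    refine outcome_eq_iff.mpr
      (main_equiv (kL := Sum.elim (fun _ : PUnit => star)
          (fun i : {i : xl // ¬ (xL i).Identical (xL iA)} => xL i.1))
        iA hB0 hrev hxr ?_ ?_ ?_ X hsX hdX)
    · rintro (u | s)
      · exact Or.inr rfl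
      · exact Or.inl ⟨s.1, rfl⟩
    · exact fun i h => ⟨Sum.inr ⟨i, h⟩, rfl⟩
    · exact ⟨Sum.inl PUnit.unit, not_rw_star⟩

end MisereDicot
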